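/- A 3-dimensional rectangular parallelepiped with side lengths a, b, c can be dissected into finitely many bars (boxes having at most 2 distinct side lengths) if and only if a, b, c are linearly dependent over ℚ, i.e., the ℚ-vector space spanned by a, b, c has dimension at most 2. -/

import Mathlib

/-- An axis-parallel box in ℝⁿ with positive side lengths. -/
structure Box (n : ℕ) where
  lower : Fin n → ℝ
  upper : Fin n → ℝ
  lower_lt_upper : ∀ i, lower i < upper i

namespace Box

/-- The closed box as a subset of ℝⁿ. -/
def toSet {n : ℕ} (B : Box n) : Set (Fin n → ℝ) :=
  Set.univ.pi fun i => Set.Icc (B.lower i) (B.upper i)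

/-- The open interior of the box. -/
def interiorSet {n : ℕ} (B : Box n) : Set (Fin n → ℝ) :=
  Set.univ.pi fun i => Set.Ioo (B.lower i) (B.upper i)

/-- The side length of the box in direction `i`. -/
def side {n : ℕ} (B : Box n) (i : Fin n) : ℝ := B.upper i - B.lower i

end Box

/-- The boxes `t` form a finite partition (dissection) of `B`:
pairwise disjoint interiors, and their union covers `B`. -/
def IsDissection {n m : ℕ} (B : Box n) (t : Fin m → Box n) : Prop :=
  (∀ i j, i ≠ j → Disjoint (t i).interiorSet (t j).interiorSet) ∧
  (⋃ i, (t i).toSet) = B.toSet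

/-- `P` is cut by a hyperplane parallel to a pair of its faces into `P₁` and `P₂`. -/
def IsSplit {n : ℕ} (P P₁ P₂ : Box n) : Prop :=
  ∃ (j : Fin n) (c : ℝ), P.lower j < c ∧ c < P.upper j ∧
    P₁.lower = P.lower ∧ P₁.upper = Function.update P.upper j c ∧
    P₂.lower = Function.update P.lower j c ∧ P₂.upper = P.upper

lemma Box.side_pos {n : ℕ} (B : Box n) (i : Fin n) : 0 < B.side i :=
  sub_pos.2 (B.lower_lt_upper i)

lemma Box.interiorSet_eq_interior {n : ℕ} (B : Box n) :
    B.interiorSet = interior B.toSet := by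
  rw [Box.toSet, Box.interiorSet, interior_pi_set Set.finite_univ]
  simp only [Function.comp, interior_Icc]

lemma aux_card_le_two {f : Fin 3 → ℝ} {i j : Fin 3} (hij : i ≠ j) (h : f i = f j) :
    (Finset.univ.image f).card ≤ 2 := by
  have h1 : Finset.univ.image f = (Finset.univ.erase i).image f := by
    apply Finset.Subset.antisymm
    · intro x hx
      rcases Finset.mem_image.1 hx with ⟨k, -, rfl⟩
      by_cases hk : k = i
      · subst hk
        exact Finset.mem_image.2 ⟨j, Finset.mem_erase.2 ⟨hij.symm, Finset.mem_univ j⟩, h.symm⟩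
      · exact Finset.mem_image.2 ⟨k, Finset.mem_erase.2 ⟨hk, Finset.mem_univ k⟩, rfl⟩
    · exact Finset.image_subset_image (Finset.erase_subset _ _)
  rw [h1]
  calc ((Finset.univ.erase i).image f).card ≤ (Finset.univ.erase i).card :=
        Finset.card_image_le
    _ = 2 := by rw [Finset.card_erase_of_mem (Finset.mem_univ i)]; simp

lemma aux_exists_eq {f : Fin 3 → ℝ} (h : (Finset.univ.image f).card ≤ 2) :
    ∃ i j, i ≠ j ∧ f i = f j := by
  by_contra hc
  push_neg at hc
  have hinj : Function.Injective f := by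
    intro i j hf
    by_contra hne
    exact hc i j hne hf
  rw [Finset.card_image_of_injective _ hinj] at h
  simp at h

def HasBarDissection (B : Box 3) : Prop :=
  ∃ (m : ℕ) (t : Fin m → Box 3), IsDissection B t ∧
    ∀ i, (Finset.univ.image (t i).side).card ≤ 2

lemma hasBarDissection_of_fintype {ι : Type} [Fintype ι] (B : Box 3) (t : ι → Box 3)
    (hdisj : ∀ i j, i ≠ j → Disjoint (t i).interiorSet (t j).interiorSet)
    (hunion : (⋃ i, (t i).toSet) = B.toSet)
    (hbar : ∀ i, (Finset.univ.image (t i).side).card ≤ 2) : HasBarDissection B := by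
  classical
  let e := Fintype.equivFin ι
  refine ⟨Fintype.card ι, fun i => t (e.symm i), ⟨?_, ?_⟩, fun i => hbar _⟩
  · intro i j hij
    exact hdisj _ _ (fun h => hij (e.symm.injective h))
  · rw [← hunion]
    exact e.symm.surjective.iUnion_comp (fun i => (t i).toSet)

lemma exists_subinterval (g : ℕ → ℝ) :
    ∀ (N : ℕ), 0 < N → ∀ x, g 0 ≤ x → x ≤ g N →
      ∃ k, k < N ∧ g k ≤ x ∧ x ≤ g (k + 1) := by
  intro N
  induction N with
  | zero => intro h; omega
  | succ N ih =>
    intro _ x h0 hN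
    by_cases hx : x ≤ g N
    · rcases Nat.eq_zero_or_pos N with rfl | hNpos
      · exact ⟨0, by omega, h0, hN⟩
      · obtain ⟨k, hk, h⟩ := ih hNpos x h0 hx
        exact ⟨k, by omega, h⟩
    · exact ⟨N, by omega, (not_le.1 hx).le, hN⟩

lemma grid_dissection (P : Box 3) (N : Fin 3 → ℕ) (hN : ∀ j, 0 < N j) :
    ∃ t : (∀ j : Fin 3, Fin (N j)) → Box 3,
      (∀ i j, i ≠ j → Disjoint (t i).interiorSet (t j).interiorSet) ∧
      (⋃ i, (t i).toSet) = P.toSet ∧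
      ∀ i, (t i).side = fun j => P.side j / N j := by
  set w : Fin 3 → ℝ := fun j => P.side j / N j with hw
  have hwpos : ∀ j, 0 < w j := fun j =>
    div_pos (P.side_pos j) (by exact_mod_cast hN j)
  have hlt : ∀ (i : ∀ j : Fin 3, Fin (N j)) (j : Fin 3),
      P.lower j + (i j : ℕ) * w j < P.lower j + ((i j : ℕ) + 1) * w j := by
    intro i j
    have := hwpos j
    nlinarith
  refine ⟨fun i => ⟨fun j => P.lower j + (i j : ℕ) * w j,
    fun j => P.lower j + ((i j : ℕ) + 1) * w j, hlt i⟩, ?_, ?_, ?_⟩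
  · intro i i' hne
    obtain ⟨j, hj⟩ := Function.ne_iff.1 hne
    rw [Set.disjoint_left]
    intro x hx hx'
    simp only [Box.interiorSet, Set.mem_univ_pi] at hx hx'
    have h1 := hx j
    have h2 := hx' j
    simp only [Set.mem_Ioo] at h1 h2
    have hwj := hwpos j
    rcases lt_or_gt_of_ne hj with h | h
    · have hc : ((i j : ℕ) : ℝ) + 1 ≤ ((i' j : ℕ) : ℝ) := by exact_mod_cast h
      nlinarith [h1.2, h2.1]
    · have hc : ((i' j : ℕ) : ℝ) + 1 ≤ ((i j : ℕ) : ℝ) := by exact_mod_cast h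
      nlinarith [h2.2, h1.1]
  · ext x
    simp only [Set.mem_iUnion, Box.toSet, Set.mem_univ_pi, Set.mem_Icc]
    constructor
    · rintro ⟨i, hi⟩ j
      have h := hi j
      have hwj := hwpos j
      have h1 : (0:ℝ) ≤ (i j : ℕ) := by positivity
      have h2 : ((i j : ℕ) : ℝ) + 1 ≤ (N j : ℝ) := by exact_mod_cast (i j).2
      have hNj : (N j : ℝ) ≠ 0 := by
        have := hN j; positivity
      have h3 : P.lower j + (N j : ℝ) * w j = P.upper j := by
        have hh : (N j : ℝ) * w j = P.side j := by rw [hw]; field_simp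
        rw [hh, Box.side]; ring
      constructor
      · nlinarith [h.1]
      · nlinarith [h.2]
    · intro hx
      have hex : ∀ j : Fin 3, ∃ k, k < N j ∧
          P.lower j + (k : ℕ) * w j ≤ x j ∧ x j ≤ P.lower j + ((k : ℕ) + 1) * w j := by
        intro j
        have hNj : (N j : ℝ) ≠ 0 := by have := hN j; positivity
        have h3 : P.lower j + (N j : ℝ) * w j = P.upper j := by
          have hh : (N j : ℝ) * w j = P.side j := by rw [hw]; field_simp
          rw [hh, Box.side]; ring
        have hmono := exists_subinterval (fun k : ℕ => P.lower j + k * w j) (N j) (hN j) (x j)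
          (by simpa using (hx j).1)
          (show x j ≤ P.lower j + (N j : ℝ) * w j by rw [h3]; exact (hx j).2)
        obtain ⟨k, hk, hl, hu⟩ := hmono
        exact ⟨k, hk, by exact_mod_cast hl, by exact_mod_cast hu⟩
      choose k hk h1 h2 using hex
      exact ⟨fun j => ⟨k j, hk j⟩, fun j => ⟨h1 j, h2 j⟩⟩
  · intro i
    funext j
    simp only [Box.side]
    ring

lemma commensurable_pair (P : Box 3) (j₁ j₂ : Fin 3) (hne : j₁ ≠ j₂) (r : ℚ) (hr : 0 < r)
    (h : P.side j₁ = (r : ℝ) * P.side j₂) : HasBarDissection P := by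
  classical
  set m : ℕ := r.num.toNat with hm'
  set n : ℕ := r.den with hn'
  have hm : 0 < m := by
    have : 0 < r.num := Rat.num_pos.2 hr
    omega
  have hn : 0 < n := r.pos
  have hr' : (r : ℝ) = (m : ℝ) / (n : ℝ) := by
    rw [Rat.cast_def, hm', hn']
    congr 1
    have : 0 < r.num := Rat.num_pos.2 hr
    exact_mod_cast (Int.toNat_of_nonneg this.le).symm
  set N : Fin 3 → ℕ := fun k => if k = j₁ then m else if k = j₂ then n else 1 with hN'
  have hN : ∀ k, 0 < N k := by
    intro k
    show 0 < (if k = j₁ then m else if k = j₂ then n else 1)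
    split_ifs <;> omega
  obtain ⟨t, hdisj, hunion, hside⟩ := grid_dissection P N hN
  apply hasBarDissection_of_fintype P t hdisj hunion
  intro i
  apply aux_card_le_two hne
  rw [hside i]
  have hNj₁ : N j₁ = m := by simp [hN']
  have hNj₂ : N j₂ = n := by simp [hN', hne.symm]
  show P.side j₁ / (N j₁ : ℝ) = P.side j₂ / (N j₂ : ℝ)
  rw [hNj₁, hNj₂]
  have hm0 : (m : ℝ) ≠ 0 := by positivity
  have hn0 : (n : ℝ) ≠ 0 := by positivity
  rw [h, hr']
  field_simp

lemma split_combine (P P₁ P₂ : Box 3) (j : Fin 3) (x : ℝ)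
    (hl : P₁.lower = P.lower) (hu : P₁.upper = Function.update P.upper j x)
    (hl2 : P₂.lower = Function.update P.lower j x) (hu2 : P₂.upper = P.upper)
    (h1 : P.lower j < x) (h2 : x < P.upper j)
    (H1 : HasBarDissection P₁) (H2 : HasBarDissection P₂) : HasBarDissection P := by
  classical
  obtain ⟨m₁, t₁, ⟨d₁, u₁⟩, b₁⟩ := H1
  obtain ⟨m₂, t₂, ⟨d₂, u₂⟩, b₂⟩ := H2
  have key1 : P₁.toSet ∪ P₂.toSet = P.toSet := by
    ext y
    simp only [Box.toSet, Set.mem_union, Set.mem_univ_pi, Set.mem_Icc, hl, hu, hl2, hu2]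
    constructor
    · rintro (h | h) k
      · rcases eq_or_ne k j with rfl | hk
        · have := h k
          rw [Function.update_self] at this
          exact ⟨this.1, this.2.trans h2.le⟩
        · have := h k
          rwa [Function.update_of_ne hk] at this
      · rcases eq_or_ne k j with rfl | hk
        · have := h k
          rw [Function.update_self] at this
          exact ⟨h1.le.trans this.1, this.2⟩
        · have := h k
          rwa [Function.update_of_ne hk] at this
    · intro h
      by_cases hy : y j ≤ x
      · left
        intro k
        rcases eq_or_ne k j with rfl | hk
        · rw [Function.update_self]
          exact ⟨(h k).1, hy⟩
        · rw [Function.update_of_ne hk]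
          exact h k
      · right
        intro k
        rcases eq_or_ne k j with rfl | hk
        · rw [Function.update_self]
          exact ⟨(not_le.1 hy).le, (h k).2⟩
        · rw [Function.update_of_ne hk]
          exact h k
  have key2 : Disjoint P₁.interiorSet P₂.interiorSet := by
    rw [Set.disjoint_left]
    intro y hy1 hy2
    simp only [Box.interiorSet, Set.mem_univ_pi, Set.mem_Ioo, hl, hu, hl2, hu2] at hy1 hy2
    have a1 := (hy1 j).2
    have a2 := (hy2 j).1
    rw [Function.update_self] at a1 a2
    linarith
  have sub1 : ∀ i, (t₁ i).interiorSet ⊆ P₁.interiorSet := by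
    intro i
    rw [Box.interiorSet_eq_interior, Box.interiorSet_eq_interior]
    apply interior_mono
    rw [← u₁]
    exact Set.subset_iUnion (fun i => (t₁ i).toSet) i
  have sub2 : ∀ i, (t₂ i).interiorSet ⊆ P₂.interiorSet := by
    intro i
    rw [Box.interiorSet_eq_interior, Box.interiorSet_eq_interior]
    apply interior_mono
    rw [← u₂]
    exact Set.subset_iUnion (fun i => (t₂ i).toSet) i
  apply hasBarDissection_of_fintype P (Sum.elim t₁ t₂) ?_ ?_ ?_
  · rintro (i | i) (i' | i') hne
    · exact d₁ i i' (fun h => hne (by rw [h]))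
    · exact (key2.mono (sub1 i) (sub2 i'))
    · exact (key2.symm.mono (sub2 i) (sub1 i'))
    · exact d₂ i i' (fun h => hne (by rw [h]))
  · rw [Set.iUnion_sum]
    simp only [Sum.elim_inl, Sum.elim_inr]
    rw [u₁, u₂, key1]
  · rintro (i | i)
    · exact b₁ i
    · exact b₂ i

lemma key_dissect (B : Box 3) (j₁ j₂ j₃ : Fin 3) (h13 : j₁ ≠ j₃) (h23 : j₂ ≠ j₃)
    (α β : ℚ) (hα : 0 < α) (hβ : 0 ≤ β)
    (hrel : B.side j₃ = (α : ℝ) * B.side j₁ + (β : ℝ) * B.side j₂) :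
    HasBarDissection B := by
  rcases eq_or_lt_of_le hβ with rfl | hβ'
  · apply commensurable_pair B j₃ j₁ h13.symm α hα
    simpa using hrel
  · have hβR : (0:ℝ) < (β : ℝ) := by exact_mod_cast hβ'
    have hαR : (0:ℝ) < (α : ℝ) := by exact_mod_cast hα
    set x : ℝ := B.lower j₃ + (α : ℝ) * B.side j₁ with hx
    have hs1 := B.side_pos j₁
    have hs2 := B.side_pos j₂
    have h1 : B.lower j₃ < x := by
      rw [hx]; nlinarith
    have h2 : x < B.upper j₃ := by
      have : B.side j₃ = B.upper j₃ - B.lower j₃ := rfl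
      nlinarith
    have pf₁ : ∀ k, B.lower k < Function.update B.upper j₃ x k := by
      intro k
      rcases eq_or_ne k j₃ with rfl | hk
      · rwa [Function.update_self]
      · rw [Function.update_of_ne hk]; exact B.lower_lt_upper k
    have pf₂ : ∀ k, Function.update B.lower j₃ x k < B.upper k := by
      intro k
      rcases eq_or_ne k j₃ with rfl | hk
      · rwa [Function.update_self]
      · rw [Function.update_of_ne hk]; exact B.lower_lt_upper k
    set P₁ : Box 3 := ⟨B.lower, Function.update B.upper j₃ x, pf₁⟩ with hP₁
    set P₂ : Box 3 := ⟨Function.update B.lower j₃ x, B.upper, pf₂⟩ with hP₂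
    have H1 : HasBarDissection P₁ := by
      apply commensurable_pair P₁ j₃ j₁ h13.symm α hα
      have e1 : P₁.side j₃ = x - B.lower j₃ := by
        simp only [hP₁, Box.side, Function.update_self]
      have e2 : P₁.side j₁ = B.side j₁ := by
        simp only [hP₁, Box.side, Function.update_of_ne h13]
      rw [e1, e2, hx]; ring
    have H2 : HasBarDissection P₂ := by
      apply commensurable_pair P₂ j₃ j₂ h23.symm β hβ'
      have e1 : P₂.side j₃ = B.upper j₃ - x := by
        simp only [hP₂, Box.side, Function.update_self]
      have e2 : P₂.side j₂ = B.side j₂ := by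
        simp only [hP₂, Box.side, Function.update_of_ne h23]
      rw [e1, e2]
      have : B.side j₃ = B.upper j₃ - B.lower j₃ := rfl
      rw [hx]
      nlinarith [hrel]
    exact split_combine B P₁ P₂ j₃ x rfl rfl rfl rfl h1 h2 H1 H2

lemma solve_coeff (p q r : ℚ) (x y z : ℝ) (hp : p ≠ 0)
    (h : (p : ℝ) * x + (q : ℝ) * y + (r : ℝ) * z = 0) :
    x = ((-q / p : ℚ) : ℝ) * y + ((-r / p : ℚ) : ℝ) * z := by
  have hp' : (p : ℝ) ≠ 0 := by exact_mod_cast hp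
  push_cast
  rw [div_mul_eq_mul_div, div_mul_eq_mul_div, ← add_div, eq_div_iff hp']
  linarith

lemma perm_sum (f : Fin 3 → ℝ) (i j k : Fin 3) (hij : i ≠ j) (hik : i ≠ k) (hjk : j ≠ k) :
    f i + f j + f k = f 0 + f 1 + f 2 := by
  fin_cases i <;> fin_cases j <;> fin_cases k <;> simp_all <;> ring

lemma all_zero_of_nonpos (q : Fin 3 → ℚ) (s : Fin 3 → ℝ) (hs : ∀ i, 0 < s i)
    (hrel : (q 0 : ℝ) * s 0 + (q 1 : ℝ) * s 1 + (q 2 : ℝ) * s 2 = 0)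
    (hsign : ∀ i, q i ≤ 0) : ∀ i, q i = 0 := by
  have t : ∀ i, (q i : ℝ) * s i ≤ 0 := fun i =>
    mul_nonpos_of_nonpos_of_nonneg (by exact_mod_cast hsign i) (hs i).le
  have hz : ∀ i, (q i : ℝ) * s i = 0 := by
    intro i
    have hi : i = 0 ∨ i = 1 ∨ i = 2 := by fin_cases i <;> decide
    rcases hi with rfl | rfl | rfl
    · linarith [t 0, t 1, t 2]
    · linarith [t 0, t 1, t 2]
    · linarith [t 0, t 1, t 2]
  intro i
  have := hz i
  rcases mul_eq_zero.1 this with h | h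
  · exact_mod_cast h
  · exact absurd h (hs i).ne'

lemma signs_lemma (q : Fin 3 → ℚ) (s : Fin 3 → ℝ) (hs : ∀ i, 0 < s i)
    (hrel : (q 0 : ℝ) * s 0 + (q 1 : ℝ) * s 1 + (q 2 : ℝ) * s 2 = 0)
    (hq : ∃ i, q i ≠ 0) : (∃ i, 0 < q i) ∧ (∃ i, q i < 0) := by
  obtain ⟨i₀, hi₀⟩ := hq
  constructor
  · by_contra h
    push_neg at h
    exact hi₀ (all_zero_of_nonpos q s hs hrel h i₀)
  · by_contra h
    push_neg at h
    have := all_zero_of_nonpos (fun i => -q i) s hs (by push_cast; linarith)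
      (fun i => by simpa using h i) i₀
    exact hi₀ (by simpa using this)

lemma from_sorted (B : Box 3) (i j k : Fin 3) (hij : i ≠ j) (hik : i ≠ k) (hjk : j ≠ k)
    (q : Fin 3 → ℚ) (hqi : 0 < q i) (hqj : q j < 0) (hqk : q k ≤ 0)
    (hrel : (q i : ℝ) * B.side i + (q j : ℝ) * B.side j + (q k : ℝ) * B.side k = 0) :
    HasBarDissection B := by
  have hα : 0 < -q j / q i := div_pos (by linarith) hqi
  have hβ : 0 ≤ -q k / q i := div_nonneg (by linarith) hqi.le
  exact key_dissect B j k i hij.symm hik.symm (-q j / q i) (-q k / q i) hα hβ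
    (solve_coeff (q i) (q j) (q k) (B.side i) (B.side j) (B.side k) hqi.ne' hrel)

lemma from_relation (B : Box 3) (q : Fin 3 → ℚ) (hq : ∃ i, q i ≠ 0)
    (hrel : (q 0 : ℝ) * B.side 0 + (q 1 : ℝ) * B.side 1 + (q 2 : ℝ) * B.side 2 = 0) :
    HasBarDissection B := by
  obtain ⟨⟨ip, hip⟩, ⟨im, him⟩⟩ := signs_lemma q B.side (B.side_pos) hrel hq
  have hij : ip ≠ im := by
    rintro rfl
    exact absurd hip (not_lt.2 him.le)
  obtain ⟨k, hki, hkj⟩ : ∃ k, k ≠ ip ∧ k ≠ im := by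
    have : ∀ i j : Fin 3, i ≠ j → ∃ k, k ≠ i ∧ k ≠ j := by decide
    exact this ip im hij
  have hperm : (q ip : ℝ) * B.side ip + (q im : ℝ) * B.side im + (q k : ℝ) * B.side k = 0 := by
    rw [perm_sum (fun t => (q t : ℝ) * B.side t) ip im k hij hki.symm hkj.symm]
    exact hrel
  rcases le_or_gt (q k) 0 with hk | hk
  · exact from_sorted B ip im k hij (Ne.symm hki) (Ne.symm hkj) q hip him hk hperm
  · -- q k > 0 : minority is im (negative); use -q
    apply from_sorted B im ip k hij.symm (Ne.symm hkj) (Ne.symm hki) (fun t => -q t)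
      (by simpa using him) (by simpa using hip) (by simpa using hk.le)
    push_cast
    linarith [hperm]

lemma easy_direction (a b c : ℝ) (hdep : ¬ LinearIndependent ℚ ![a, b, c])
    (B : Box 3) (hside : B.side = ![a, b, c]) : HasBarDissection B := by
  rw [Fintype.linearIndependent_iff] at hdep
  push_neg at hdep
  obtain ⟨q, hsum, i₀, hi₀⟩ := hdep
  apply from_relation B q ⟨i₀, hi₀⟩
  have h0 : B.side 0 = a := by rw [hside]; rfl
  have h1 : B.side 1 = b := by rw [hside]; rfl
  have h2 : B.side 2 = c := by rw [hside]; rfl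
  rw [h0, h1, h2]
  rw [Fin.sum_univ_three] at hsum
  simpa [Rat.smul_def] using hsum

lemma hard_direction (a b c : ℝ) (ha : 0 < a) (hb : 0 < b) (hc : 0 < c)
    (hli : LinearIndependent ℚ ![a, b, c])
    (H : ∀ B : Box 3, B.side = ![a, b, c] →
      ∃ (m : ℕ) (t : Fin m → Box 3), IsDissection B t ∧
        ∀ i, (Finset.univ.image (t i).side).card ≤ 2) : False := by
  classical
  set v : Fin 3 → ℝ := ![a, b, c] with hv'
  have hv : ∀ i, 0 < v i := by
    intro i
    have hi : i = 0 ∨ i = 1 ∨ i = 2 := by fin_cases i <;> decide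
    rcases hi with rfl | rfl | rfl <;> simpa [hv']
  have hinj : Function.Injective v := hli.injective
  have hcr := hli.linearIndepOn_id
  set bs := Module.Basis.extend hcr with hbs
  have hmem : ∀ j : Fin 3, v j ∈ hcr.extend (Set.subset_univ _) :=
    fun j => hcr.subset_extend _ ⟨j, rfl⟩
  set e : Fin 3 → ↥(hcr.extend (Set.subset_univ _)) := fun j => ⟨v j, hmem j⟩ with he
  set φ : Fin 3 → ℝ → ℝ := fun j x => ((bs.repr x) (e j) : ℝ) with hφ
  have hφadd : ∀ j x y, φ j (x + y) = φ j x + φ j y := by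
    intro j x y
    simp only [hφ, map_add, Finsupp.add_apply]
    push_cast
    ring
  have hφv : ∀ j k : Fin 3, φ j (v k) = if j = k then 1 else 0 := by
    intro j k
    have h1 : bs (e k) = v k := Module.Basis.extend_apply_self hcr (e k)
    rw [hφ]
    simp only
    rw [← h1, bs.repr_self_apply]
    by_cases hjk : j = k
    · subst hjk; simp
    · have hne : ¬(e k = e j) := fun hh => hjk (hinj (congrArg Subtype.val hh)).symm
      simp [hne, hjk]
  set μ : BoxIntegral.Box (Fin 3) → ℝ :=
    fun I => Matrix.det (Matrix.of fun i j => φ j (I.upper i - I.lower i)) with hμ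
  have elim_coe : ∀ (J : BoxIntegral.Box (Fin 3)),
      (J : WithBot (BoxIntegral.Box (Fin 3))).elim' (0:ℝ) μ = μ J := fun J => rfl
  have hsplit : ∀ I : BoxIntegral.Box (Fin 3), (I : WithTop (BoxIntegral.Box (Fin 3))) ≤ ⊤ →
      ∀ {i : Fin 3} {x : ℝ}, x ∈ Set.Ioo (I.lower i) (I.upper i) →
      (I.splitLower i x).elim' 0 μ + (I.splitUpper i x).elim' 0 μ = μ I := by
    intro I _ i x hx
    rw [BoxIntegral.Box.splitLower_def hx, BoxIntegral.Box.splitUpper_def hx,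
      elim_coe, elim_coe]
    set A : Matrix (Fin 3) (Fin 3) ℝ := Matrix.of fun k j => φ j (I.upper k - I.lower k) with hA
    have e₁ : (Matrix.of fun k j => φ j (Function.update I.upper i x k - I.lower k))
        = Matrix.updateRow A i (fun j => φ j (x - I.lower i)) := by
      ext k j
      by_cases hk : k = i
      · subst hk
        simp [Matrix.updateRow_self, Function.update_self]
      · simp [Matrix.updateRow_ne hk, Function.update_of_ne hk, hA]
    have e₂ : (Matrix.of fun k j => φ j (I.upper k - Function.update I.lower i x k))
        = Matrix.updateRow A i (fun j => φ j (I.upper i - x)) := by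
      ext k j
      by_cases hk : k = i
      · subst hk
        simp [Matrix.updateRow_self, Function.update_self]
      · simp [Matrix.updateRow_ne hk, Function.update_of_ne hk, hA]
    show Matrix.det (Matrix.of fun k j => φ j (Function.update I.upper i x k - I.lower k))
        + Matrix.det (Matrix.of fun k j => φ j (I.upper k - Function.update I.lower i x k))
        = Matrix.det A
    rw [e₁, e₂, ← Matrix.det_updateRow_add]
    have hrow : ((fun j => φ j (x - I.lower i)) + (fun j => φ j (I.upper i - x))) = A i := by
      funext j
      rw [Pi.add_apply, ← hφadd]
      show φ j ((x - I.lower i) + (I.upper i - x)) = φ j (I.upper i - I.lower i)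
      congr 1
      ring
    rw [hrow, Matrix.updateRow_eq_self]
  set F := BoxIntegral.BoxAdditiveMap.ofMapSplitAdd μ ⊤ hsplit with hF
  set I₀ : BoxIntegral.Box (Fin 3) := ⟨fun _ => 0, v, fun i => hv i⟩ with hI₀'
  set B₀ : Box 3 := ⟨fun _ => 0, v, fun i => hv i⟩ with hB₀'
  obtain ⟨m, t, ⟨hdisj, hunion⟩, hbar⟩ := H B₀ (by
    funext i
    show v i - 0 = v i
    ring)
  have hsub : ∀ i, (t i).toSet ⊆ B₀.toSet := by
    intro i
    rw [← hunion]
    exact Set.subset_iUnion (fun i => (t i).toSet) i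
  have hbounds : ∀ i k, (0:ℝ) ≤ (t i).lower k ∧ (t i).upper k ≤ v k := by
    intro i k
    have hlow : (t i).lower ∈ (t i).toSet := by
      simp only [Box.toSet, Set.mem_univ_pi, Set.mem_Icc]
      exact fun j => ⟨le_refl _, ((t i).lower_lt_upper j).le⟩
    have hup : (t i).upper ∈ (t i).toSet := by
      simp only [Box.toSet, Set.mem_univ_pi, Set.mem_Icc]
      exact fun j => ⟨((t i).lower_lt_upper j).le, le_refl _⟩
    have h1 := hsub i hlow
    have h2 := hsub i hup
    simp only [Box.toSet, Set.mem_univ_pi, Set.mem_Icc] at h1 h2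
    exact ⟨(h1 k).1, (h2 k).2⟩
  set bx : Fin m → BoxIntegral.Box (Fin 3) :=
    fun i => ⟨(t i).lower, (t i).upper, (t i).lower_lt_upper⟩ with hbx
  have hle : ∀ i, bx i ≤ I₀ := by
    intro i
    rw [BoxIntegral.Box.le_iff_bounds]
    exact ⟨fun k => (hbounds i k).1, fun k => (hbounds i k).2⟩
  set boxesF : Finset (BoxIntegral.Box (Fin 3)) := Finset.univ.image bx with hboxesF
  have hpd : Set.Pairwise ↑boxesF
      (Function.onFun Disjoint ((↑) : BoxIntegral.Box (Fin 3) → Set (Fin 3 → ℝ))) := by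
    intro J₁ hJ₁ J₂ hJ₂ hne
    rw [hboxesF, Finset.coe_image] at hJ₁ hJ₂
    obtain ⟨i₁, -, rfl⟩ := hJ₁
    obtain ⟨i₂, -, rfl⟩ := hJ₂
    have hii : i₁ ≠ i₂ := fun h => hne (by rw [h])
    have : Disjoint ((bx i₁ : Set (Fin 3 → ℝ))) ((bx i₂ : Set (Fin 3 → ℝ))) := by
      rw [Set.disjoint_left]
      intro x hx₁ hx₂
      have hm₁ := (BoxIntegral.Box.mem_def _).mp ((BoxIntegral.Box.mem_coe _).mp hx₁)
      have hm₂ := (BoxIntegral.Box.mem_def _).mp ((BoxIntegral.Box.mem_coe _).mp hx₂)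
      set y : Fin 3 → ℝ := fun k => (max ((t i₁).lower k) ((t i₂).lower k) + x k) / 2 with hy
      have hy₁ : y ∈ (t i₁).interiorSet := by
        simp only [Box.interiorSet, Set.mem_univ_pi, Set.mem_Ioo]
        intro k
        have a1 := (hm₁ k).1
        have a2 := (hm₁ k).2
        have b1 := (hm₂ k).1
        have hmax : max ((t i₁).lower k) ((t i₂).lower k) < x k := max_lt a1 b1
        have hm1 : (t i₁).lower k ≤ max ((t i₁).lower k) ((t i₂).lower k) := le_max_left _ _
        constructor
        · show (t i₁).lower k < (max ((t i₁).lower k) ((t i₂).lower k) + x k) / 2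
          linarith
        · show (max ((t i₁).lower k) ((t i₂).lower k) + x k) / 2 < (t i₁).upper k
          linarith
      have hy₂ : y ∈ (t i₂).interiorSet := by
        simp only [Box.interiorSet, Set.mem_univ_pi, Set.mem_Ioo]
        intro k
        have a1 := (hm₂ k).1
        have a2 := (hm₂ k).2
        have b1 := (hm₁ k).1
        have hmax : max ((t i₁).lower k) ((t i₂).lower k) < x k := max_lt b1 a1
        have hm1 : (t i₂).lower k ≤ max ((t i₁).lower k) ((t i₂).lower k) := le_max_right _ _
        constructor
        · show (t i₂).lower k < (max ((t i₁).lower k) ((t i₂).lower k) + x k) / 2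
          linarith
        · show (max ((t i₁).lower k) ((t i₂).lower k) + x k) / 2 < (t i₂).upper k
          linarith
      exact Set.disjoint_left.mp (hdisj i₁ i₂ hii) hy₁ hy₂
    exact this
  set π : BoxIntegral.Prepartition I₀ := ⟨boxesF, by
    intro J hJ
    rw [hboxesF] at hJ
    obtain ⟨i, -, rfl⟩ := Finset.mem_image.1 hJ
    exact hle i, hpd⟩ with hπ
  have hpart : π.IsPartition := by
    intro x hx
    have hx' := (BoxIntegral.Box.mem_def _).mp hx
    set δ : ℝ := min (x 0) (min (x 1) (x 2)) with hδ
    have hx0 : ∀ k, 0 < x k := by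
      intro k
      have := (hx' k).1
      simpa using this
    have hδpos : 0 < δ := lt_min (hx0 0) (lt_min (hx0 1) (hx0 2))
    have hδle : ∀ k, δ ≤ x k := by
      intro k
      have hi : k = 0 ∨ k = 1 ∨ k = 2 := by fin_cases k <;> decide
      rcases hi with rfl | rfl | rfl
      · exact min_le_left _ _
      · exact le_trans (min_le_right _ _) (min_le_left _ _)
      · exact le_trans (min_le_right _ _) (min_le_right _ _)
    have hy : ∀ n : ℕ, ∃ i, (fun k => x k - δ / (n + 1)) ∈ (t i).toSet := by
      intro n
      have hposn : (0:ℝ) < (n:ℝ) + 1 := by positivity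
      have hpos : 0 < δ / ((n:ℝ) + 1) := div_pos hδpos hposn
      have hmem : (fun k => x k - δ / ((n:ℝ) + 1)) ∈ B₀.toSet := by
        simp only [Box.toSet, Set.mem_univ_pi, Set.mem_Icc]
        intro k
        have h1 : δ / ((n:ℝ) + 1) ≤ δ := by
          apply div_le_self hδpos.le
          linarith [Nat.cast_nonneg (α := ℝ) n]
        have h2 := (hx' k).2
        have h3 := hδle k
        constructor
        · show (0:ℝ) ≤ x k - δ / ((n:ℝ) + 1)
          linarith
        · show x k - δ / ((n:ℝ) + 1) ≤ v k
          linarith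
      rw [← hunion] at hmem
      simpa using hmem
    choose Fn hFn using hy
    obtain ⟨i, hi⟩ := Finite.exists_infinite_fiber Fn
    have hiS : (Fn ⁻¹' {i}).Infinite := Set.infinite_coe_iff.mp hi
    refine ⟨bx i, Finset.mem_image.2 ⟨i, Finset.mem_univ i, rfl⟩, ?_⟩
    rw [BoxIntegral.Box.mem_def]
    intro k
    have hmem : ∀ n ∈ Fn ⁻¹' {i},
        (t i).lower k ≤ x k - δ / ((n:ℝ) + 1) ∧ x k - δ / ((n:ℝ) + 1) ≤ (t i).upper k := by
      intro n hn
      have hfn : Fn n = i := hn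
      have := hFn n
      rw [hfn] at this
      simp only [Box.toSet, Set.mem_univ_pi, Set.mem_Icc] at this
      exact this k
    obtain ⟨n₀, hn₀⟩ := hiS.nonempty
    have hposn₀ : (0:ℝ) < δ / ((n₀:ℝ) + 1) := by positivity
    constructor
    · have := (hmem n₀ hn₀).1
      show (t i).lower k < x k
      linarith
    · show x k ≤ (t i).upper k
      by_contra hgt
      push_neg at hgt
      have hd : 0 < x k - (t i).upper k := by linarith
      obtain ⟨n, hn, hngt⟩ := hiS.exists_gt ⌈δ / (x k - (t i).upper k)⌉₊
      have h2 := (hmem n hn).2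
      have hcast : (⌈δ / (x k - (t i).upper k)⌉₊ : ℝ) ≤ (n : ℝ) := by exact_mod_cast hngt.le
      have hlt : δ / (x k - (t i).upper k) < (n:ℝ) + 1 := by
        have := Nat.le_ceil (δ / (x k - (t i).upper k))
        linarith
      have hlt2 : δ < ((n:ℝ) + 1) * (x k - (t i).upper k) := by
        rw [div_lt_iff₀ hd] at hlt
        linarith [hlt]
      have hposn : (0:ℝ) < (n:ℝ) + 1 := by positivity
      have hcancel : δ / ((n:ℝ) + 1) * ((n:ℝ) + 1) = δ := div_mul_cancel₀ δ hposn.ne'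
      nlinarith [h2, hlt2, hposn, hcancel]
  have hI₀val : μ I₀ = 1 := by
    have hM : (Matrix.of fun i j => φ j (I₀.upper i - I₀.lower i))
        = (1 : Matrix (Fin 3) (Fin 3) ℝ) := by
      ext i j
      have hd : I₀.upper i - I₀.lower i = v i := by
        show v i - 0 = v i
        ring
      rw [Matrix.of_apply, hd, hφv j i, Matrix.one_apply]
      by_cases hij : i = j
      · simp [hij]
      · simp [hij, Ne.symm hij]
    rw [hμ]
    simp only
    rw [hM, Matrix.det_one]
  have hzero : ∀ J ∈ π.boxes, μ J = 0 := by
    intro J hJ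
    have hJ' : J ∈ boxesF := hJ
    rw [hboxesF] at hJ'
    obtain ⟨i, -, rfl⟩ := Finset.mem_image.1 hJ'
    obtain ⟨k, k', hkk, hk⟩ := aux_exists_eq (hbar i)
    apply Matrix.det_zero_of_row_eq hkk
    funext j
    show φ j ((bx i).upper k - (bx i).lower k) = φ j ((bx i).upper k' - (bx i).lower k')
    exact congrArg (φ j) hk
  have hsum := F.sum_partition_boxes (le_top) hpart
  have h0 : (0:ℝ) = 1 := by
    calc (0:ℝ) = ∑ J ∈ π.boxes, μ J := (Finset.sum_eq_zero hzero).symm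
    _ = μ I₀ := hsum
    _ = 1 := hI₀val
  norm_num at h0

/-- A box `a × b × c` can be dissected into bars (boxes with at most 2 distinct side
lengths) iff `a, b, c` are linearly dependent over `ℚ`. -/
theorem box_dissects_into_bars_iff (a b c : ℝ) (ha : 0 < a) (hb : 0 < b) (hc : 0 < c) :
    (∀ B : Box 3, B.side = ![a, b, c] →
      ∃ (m : ℕ) (t : Fin m → Box 3), IsDissection B t ∧
        ∀ i, (Finset.univ.image (t i).side).card ≤ 2) ↔
    ¬ LinearIndependent ℚ ![a, b, c] := by
  constructor
  · intro H hli
    exact hard_direction a b c ha hb hc hli H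
  · intro hdep B hB
    exact easy_direction a b c hdep B hB
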